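/- Let v ≥ 2, n ≥ 1 and d ≥ 1 be integers, h : {1,…,n} → ℝ^d, and let k be the affine dimension of the set {h(1), …, h(n)}, i.e., the dimension of the linear span of {h(t) − h(1) : t = 1,…,n}. Fix w ∈ ℝ^v with all w_u > 0 and Σ_u w_u = 1, and let P ⊆ ℝ^{v×n} be the polytope of all ξ = (ξ(u,t)) satisfying: ξ(u,t) ≥ 0 for all (u,t); Σ_{t=1}^n ξ(u,t) = w_u for all u ∈ {1,…,v}; (1/w_1) Σ_{t=1}^n ξ(1,t) h(t) = (1/w_u) Σ_{t=1}^n ξ(u,t) h(t) for all u ∈ {2,…,v}; and Σ_{u=1}^v ξ(u,t) = 1/n for all t ∈ {1,…,n}. Then every extreme point ξ of P has at most v + (v−1)k + n − 1 nonzero entries. -/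

import Mathlib

open Finset

noncomputable section

set_option maxHeartbeats 1000000

/-- Every extreme point of the polytope P of approximate designs
with prescribed treatment proportions w that are balanced with respect to the
nuisance regressor h and assign weight 1/n to each nuisance condition has at
most v + (v−1)k + n − 1 nonzero entries, where k is the affine dimension of
{h(1),…,h(n)}, i.e. the dimension of the span of {h(t) − h(1)}. -/
theorem stmt18 {v n d : ℕ} (hv : 2 ≤ v) (hn : 0 < n) (hd : 0 < d)
    (h : Fin n → Fin d → ℝ)
    (k : ℕ)
    (hk : k = Module.finrank ℝ
      (Submodule.span ℝ (Set.range fun t : Fin n => h t - h ⟨0, hn⟩)))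
    (w : Fin v → ℝ) (hw : ∀ u, 0 < w u) (hw1 : ∑ u, w u = 1)
    (P : Set (Fin v → Fin n → ℝ))
    (hP : P = {ξ | (∀ u t, 0 ≤ ξ u t) ∧
      (∀ u, ∑ t, ξ u t = w u) ∧
      (∀ u : Fin v, (w ⟨0, by omega⟩)⁻¹ • ∑ t, ξ ⟨0, by omega⟩ t • h t
        = (w u)⁻¹ • ∑ t, ξ u t • h t) ∧
      (∀ t, ∑ u, ξ u t = (n : ℝ)⁻¹)})
    (ξ : Fin v → Fin n → ℝ) (hξ : ξ ∈ Set.extremePoints ℝ P) :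
    (Finset.univ.filter fun p : Fin v × Fin n => ξ p.1 p.2 ≠ 0).card
      ≤ v + (v - 1) * k + n - 1 := by
  classical
  by_contra hcard
  push_neg at hcard
  have hξP := hξ.1
  rw [hP] at hξP
  obtain ⟨hpos, hrow, hbal, hcol⟩ := hξP
  set z : Fin v := ⟨0, by omega⟩ with hzdef
  set z' : Fin n := ⟨0, hn⟩ with hz'def
  set g : Fin n → Fin d → ℝ := fun t => h t - h z' with hgdef
  set V : Submodule ℝ (Fin d → ℝ) := Submodule.span ℝ (Set.range g) with hVdef
  set S : Finset (Fin v × Fin n) :=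
    Finset.univ.filter (fun p : Fin v × Fin n => ξ p.1 p.2 ≠ 0) with hSdef
  -- the extension linear map
  let e : (↥S → ℝ) →ₗ[ℝ] (Fin v → Fin n → ℝ) :=
    { toFun := fun f u t => if hm : (u, t) ∈ S then f ⟨(u, t), hm⟩ else 0
      map_add' := by
        intro f1 f2; funext u t; by_cases hm : (u, t) ∈ S <;> simp [hm]
      map_smul' := by
        intro c f1; funext u t; by_cases hm : (u, t) ∈ S <;> simp [hm] }
  let γ : Fin n → V := fun t => ⟨g t, Submodule.subset_span ⟨t, rfl⟩⟩
  let rowSum : Fin v → (Fin v → Fin n → ℝ) →ₗ[ℝ] ℝ := fun u =>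
    { toFun := fun η => ∑ t, η u t
      map_add' := by intros; simp [Finset.sum_add_distrib]
      map_smul' := by intros; simp [Finset.mul_sum] }
  let rowVec : Fin v → (Fin v → Fin n → ℝ) →ₗ[ℝ] V := fun u =>
    { toFun := fun η => ∑ t, η u t • γ t
      map_add' := by intros; simp [add_smul, Finset.sum_add_distrib]
      map_smul' := by intros; simp [smul_smul, Finset.smul_sum] }
  let colSum : Fin n → (Fin v → Fin n → ℝ) →ₗ[ℝ] ℝ := fun t =>
    { toFun := fun η => ∑ u, η u t
      map_add' := by intros; simp [Finset.sum_add_distrib]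
      map_smul' := by intros; simp [Finset.mul_sum] }
  let Φ : (↥S → ℝ) →ₗ[ℝ]
      ({u : Fin v // u ≠ z} → ℝ) × (({u : Fin v // u ≠ z} → V) × (Fin n → ℝ)) :=
    LinearMap.prod (LinearMap.pi fun u : {u : Fin v // u ≠ z} => (rowSum u.1).comp e)
      (LinearMap.prod
        (LinearMap.pi fun u : {u : Fin v // u ≠ z} =>
          ((w z)⁻¹ • rowVec z - (w u.1)⁻¹ • rowVec u.1).comp e)
        (LinearMap.pi fun t : Fin n => (colSum t).comp e))
  -- dimension count
  have hdom : Module.finrank ℝ (↥S → ℝ) = S.card := by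
    rw [Module.finrank_fintype_fun_eq_card, Fintype.card_coe]
  have hcardsub : Fintype.card {u : Fin v // u ≠ z} = v - 1 := by
    simp [Fintype.card_subtype_compl]
  have htarget : Module.finrank ℝ
      (({u : Fin v // u ≠ z} → ℝ) × (({u : Fin v // u ≠ z} → V) × (Fin n → ℝ)))
      = (v - 1) + ((v - 1) * k + n) := by
    rw [Module.finrank_prod, Module.finrank_prod,
      Module.finrank_fintype_fun_eq_card, Module.finrank_fintype_fun_eq_card,
      Module.finrank_pi_fintype, Finset.sum_const, smul_eq_mul, Finset.card_univ,
      hcardsub, ← hk, Fintype.card_fin]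
  have hnotinj : ¬ Function.Injective Φ := by
    intro hinj
    have hle := LinearMap.finrank_le_finrank_of_injective hinj
    rw [hdom, htarget] at hle
    have hK : 0 ≤ (v - 1) * k := Nat.zero_le _
    omega
  rw [← LinearMap.ker_eq_bot] at hnotinj
  obtain ⟨f, hfker, hfne⟩ := Submodule.exists_mem_ne_zero_of_ne_bot hnotinj
  rw [LinearMap.mem_ker] at hfker
  set η : Fin v → Fin n → ℝ := e f with hηdef
  -- unpack the kernel conditions
  have hη1 : ∀ u : Fin v, u ≠ z → ∑ t, η u t = 0 := by
    intro u hu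
    have := congrFun (congrArg Prod.fst hfker) ⟨u, hu⟩
    simpa [Φ, rowSum] using this
  have hη3 : ∀ t, ∑ u, η u t = 0 := by
    intro t
    have := congrFun (congrArg (fun p => p.2.2) hfker) t
    simpa [Φ, colSum] using this
  have hη1z : ∑ t, η z t = 0 := by
    have htot : ∑ u, ∑ t, η u t = 0 := by
      rw [Finset.sum_comm]
      exact Finset.sum_eq_zero fun t _ => hη3 t
    rw [← Finset.add_sum_erase _ _ (Finset.mem_univ z)] at htot
    rw [Finset.sum_eq_zero (fun u hu => hη1 u (Finset.ne_of_mem_erase hu))] at htot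
    simpa using htot
  have hη1' : ∀ u, ∑ t, η u t = 0 := by
    intro u
    rcases eq_or_ne u z with rfl | hu
    · exact hη1z
    · exact hη1 u hu
  have hη2 : ∀ u : Fin v, u ≠ z →
      (w z)⁻¹ • ∑ t, η z t • g t = (w u)⁻¹ • ∑ t, η u t • g t := by
    intro u hu
    have h0 := congrFun (congrArg (fun p => p.2.1) hfker) ⟨u, hu⟩
    have h1 : (w z)⁻¹ • ∑ t, η z t • γ t = (w u)⁻¹ • ∑ t, η u t • γ t := by
      have : ((w z)⁻¹ • rowVec z - (w u)⁻¹ • rowVec u) (e f) = 0 := by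
        simpa [Φ] using h0
      simp only [LinearMap.sub_apply, LinearMap.smul_apply, sub_eq_zero] at this
      simpa [rowVec] using this
    have := congrArg (Subtype.val : V → (Fin d → ℝ)) h1
    simpa [γ] using this
  -- convert g-balance into h-balance
  have hgh : ∀ u, ∑ t, η u t • h t = ∑ t, η u t • g t := by
    intro u
    have : ∑ t, η u t • h t - ∑ t, η u t • g t = (∑ t, η u t) • h z' := by
      rw [← Finset.sum_sub_distrib, Finset.sum_smul]
      refine Finset.sum_congr rfl fun t _ => ?_
      rw [← smul_sub, hgdef]
      simp
    rw [hη1' u, zero_smul] at this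
    exact sub_eq_zero.mp this
  have hη2' : ∀ u : Fin v,
      (w z)⁻¹ • ∑ t, η z t • h t = (w u)⁻¹ • ∑ t, η u t • h t := by
    intro u
    rcases eq_or_ne u z with rfl | hu
    · rfl
    · rw [hgh, hgh]; exact hη2 u hu
  -- η vanishes off S
  have hηoff : ∀ u t, (u, t) ∉ S → η u t = 0 := by
    intro u t hm
    simp [hηdef, e, dif_neg hm]
  -- ξ is positive on S
  have hSne : S.Nonempty := by
    rw [← Finset.card_pos]
    have hK : 0 ≤ (v - 1) * k := Nat.zero_le _
    omega
  set c : ℝ := S.inf' hSne (fun p => ξ p.1 p.2) with hcdef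
  have hcpos : 0 < c := by
    rw [hcdef, Finset.lt_inf'_iff]
    intro p hp
    rw [hSdef, Finset.mem_filter] at hp
    exact lt_of_le_of_ne (hpos p.1 p.2) (Ne.symm hp.2)
  set M : ℝ := S.sup' hSne (fun p => |η p.1 p.2|) with hMdef
  have hMnn : 0 ≤ M := by
    obtain ⟨p, hp⟩ := hSne
    refine le_trans (abs_nonneg (η p.1 p.2)) ?_
    rw [hMdef]
    exact Finset.le_sup' (fun p => |η p.1 p.2|) hp
  set ε : ℝ := c / (M + 1) with hεdef
  have hεpos : 0 < ε := div_pos hcpos (by linarith)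
  have key : ∀ u t, ε * |η u t| ≤ ξ u t := by
    intro u t
    by_cases hm : (u, t) ∈ S
    · have h1 : |η u t| ≤ M := Finset.le_sup' (fun p => |η p.1 p.2|) hm
      have h2 : c ≤ ξ u t := Finset.inf'_le (fun p => ξ p.1 p.2) hm
      have h3 : ε * |η u t| ≤ ε * (M + 1) :=
        mul_le_mul_of_nonneg_left (by linarith) (le_of_lt hεpos)
      have h4 : ε * (M + 1) = c := div_mul_cancel₀ c (by linarith)
      linarith
    · rw [hηoff u t hm]
      simpa using hpos u t
  have habs : ∀ u t, |ε * η u t| ≤ ξ u t := by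
    intro u t
    rw [abs_mul, abs_of_pos hεpos]
    exact key u t
  -- the two perturbed designs
  set ξp : Fin v → Fin n → ℝ := fun u t => ξ u t + ε * η u t with hξpdef
  set ξm : Fin v → Fin n → ℝ := fun u t => ξ u t - ε * η u t with hξmdef
  have hsum_h : ∀ (s : ℝ) (u : Fin v),
      ∑ t, (ξ u t + s * η u t) • h t = (∑ t, ξ u t • h t) + s • ∑ t, η u t • h t := by
    intro s u
    rw [Finset.smul_sum, ← Finset.sum_add_distrib]
    refine Finset.sum_congr rfl fun t _ => ?_
    rw [add_smul, smul_smul]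
  have hmem : ∀ s : ℝ, (∀ u t, 0 ≤ ξ u t + s * η u t) →
      (fun u t => ξ u t + s * η u t) ∈ P := by
    intro s hnn
    rw [hP]
    refine ⟨hnn, ?_, ?_, ?_⟩
    · intro u
      rw [Finset.sum_add_distrib, hrow u, ← Finset.mul_sum, hη1' u, mul_zero, add_zero]
    · intro u
      show (w z)⁻¹ • ∑ t, (ξ z t + s * η z t) • h t
        = (w u)⁻¹ • ∑ t, (ξ u t + s * η u t) • h t
      rw [hsum_h s z, hsum_h s u, smul_add, smul_add, hbal u,
        smul_comm (w z)⁻¹ s, smul_comm (w u)⁻¹ s, hη2' u]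
    · intro t
      rw [Finset.sum_add_distrib, hcol t, ← Finset.mul_sum, hη3 t, mul_zero, add_zero]
  have hmemp : ξp ∈ P := by
    refine hmem ε fun u t => ?_
    have := abs_le.mp (habs u t)
    linarith [this.1]
  have hmemm : ξm ∈ P := by
    have : ξm = fun u t => ξ u t + (-ε) * η u t := by
      funext u t; simp [hξmdef]; ring
    rw [this]
    refine hmem (-ε) fun u t => ?_
    have := abs_le.mp (habs u t)
    linarith [this.2]
  have hseg : ξ ∈ openSegment ℝ ξm ξp := by
    refine ⟨1/2, 1/2, by norm_num, by norm_num, by norm_num, ?_⟩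
    funext u t
    simp only [Pi.add_apply, Pi.smul_apply, smul_eq_mul, hξpdef, hξmdef]
    ring
  have := hξ.2 hmemm hmemp hseg
  -- conclude η = 0, contradiction
  obtain ⟨p, hp⟩ := Function.ne_iff.mp hfne
  have hηp : η p.1.1 p.1.2 ≠ 0 := by
    have hm : (p.1.1, p.1.2) ∈ S := by
      simpa using p.2
    rw [hηdef]
    show (if hm' : (p.1.1, p.1.2) ∈ S then f ⟨(p.1.1, p.1.2), hm'⟩ else 0) ≠ 0
    rw [dif_pos hm]
    simpa using hp
  have := congrFun (congrFun this p.1.1) p.1.2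
  simp only [hξmdef] at this
  have : ε * η p.1.1 p.1.2 = 0 := by linarith
  rcases mul_eq_zero.mp this with h' | h'
  · exact absurd h' (ne_of_gt hεpos)
  · exact hηp h'

end
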